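/- arXiv:1210.5825 — 2 statements merged into one kernel-verified Lean document; each statement's English description precedes it below -/
import Mathlib

section
/- Let A be a Poisson algebra and I ⊆ A an ideal (not necessarily Poisson). The Poisson core P(I), defined as the sum of all Poisson ideals of A contained in I, is itself a Poisson ideal contained in I, and it is the largest such. Moreover, if I is a prime ideal, then P(I) is a Poisson prime ideal (prime and stable under the bracket), provided A is Noetherian over a field of characteristic 0. -/
set_option linter.unusedSectionVars false

section PoissonCore

variable {k A : Type} [Field k] [CharZero k] [CommRing A] [Algebra k A]
variable (bracket : A →ₗ[k] A →ₗ[k] A)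

/-- Iterated application of brackets as a linear map. -/
def pactL : List A → (A →ₗ[k] A)
  | [] => LinearMap.id
  | a :: w => (pactL w).comp (bracket a)

@[simp] lemma pactL_nil (x : A) : pactL bracket [] x = x := rfl

@[simp] lemma pactL_cons (a : A) (w : List A) (x : A) :
    pactL bracket (a :: w) x = pactL bracket w (bracket a x) := rfl

variable (leibniz : ∀ a b c : A, bracket a (b * c) = bracket a b * c + b * bracket a c)
variable (I : Ideal A)
include leibniz

lemma pactL_mul_mem : ∀ (w : List A) (x y : A),
    (∀ w' : List A, pactL bracket w' x ∈ I) → pactL bracket w (x * y) ∈ I := by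
  intro w
  induction w with
  | nil => intro x y hx; exact I.mul_mem_right y (hx [])
  | cons a w ih =>
      intro x y hx
      have : pactL bracket (a :: w) (x * y)
          = pactL bracket w (bracket a x * y) + pactL bracket w (x * bracket a y) := by
        rw [pactL_cons, leibniz, map_add]
      rw [this]
      exact I.add_mem (ih (bracket a x) y (fun w' => hx (a :: w')))
        (ih x (bracket a y) hx)

/-- The Poisson core as an ideal. -/
def pcore : Ideal A where
  carrier := {x | ∀ w : List A, pactL bracket w x ∈ I}
  zero_mem' := fun w => by simp [map_zero]
  add_mem' := fun {x y} hx hy w => by rw [map_add]; exact I.add_mem (hx w) (hy w)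
  smul_mem' := fun c x hx w => by
    have : c • x = x * c := by rw [smul_eq_mul, mul_comm]
    rw [this]
    exact pactL_mul_mem bracket leibniz I w x c hx

lemma mem_pcore {x : A} : x ∈ pcore bracket leibniz I ↔ ∀ w : List A, pactL bracket w x ∈ I :=
  Iff.rfl

lemma pcore_poisson (a : A) {x : A} (hx : x ∈ pcore bracket leibniz I) :
    bracket a x ∈ pcore bracket leibniz I :=
  fun w => hx (a :: w)

lemma pcore_le : pcore bracket leibniz I ≤ I := fun _ hx => hx []

lemma le_pcore (J : Ideal A) (hJ : ∀ a : A, ∀ x ∈ J, bracket a x ∈ J) (hJI : J ≤ I) :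
    J ≤ pcore bracket leibniz I := by
  have key : ∀ (w : List A) (x : A), x ∈ J → pactL bracket w x ∈ J := by
    intro w
    induction w with
    | nil => exact fun x hx => hx
    | cons a w ih => exact fun x hx => ih (bracket a x) (hJ a x hx)
  exact fun x hx w => hJI (key w x hx)

end PoissonCore

lemma cast_cancel (k : Type) {A : Type} [Field k] [CharZero k] [CommRing A] [Algebra k A]
    (K : Ideal A) {m : ℕ} (hm : 0 < m) {y : A} (h : (m : A) * y ∈ K) : y ∈ K := by
  have hy : y = algebraMap k A ((m : k)⁻¹) * ((m : A) * y) := by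
    rw [← mul_assoc]
    have h2 : algebraMap k A ((m : k)⁻¹) * (m : A) = 1 := by
      rw [← map_natCast (algebraMap k A) m, ← map_mul,
        inv_mul_cancel₀ (by exact_mod_cast hm.ne'), map_one]
    rw [h2, one_mul]
  rw [hy]
  exact K.mul_mem_left _ h

section Rad

variable {k A : Type} [Field k] [CharZero k] [CommRing A] [Algebra k A]
variable (bracket : A →ₗ[k] A →ₗ[k] A)
variable (leibniz : ∀ a b c : A, bracket a (b * c) = bracket a b * c + b * bracket a c)
include leibniz

lemma bracket_one (a : A) : bracket a 1 = 0 := by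
  have h := leibniz a 1 1
  simp only [mul_one, one_mul] at h
  exact (left_eq_add.mp h)

lemma bracket_pow (a x : A) : ∀ m : ℕ,
    bracket a (x ^ (m + 1)) = ((m : A) + 1) * (x ^ m * bracket a x)
  | 0 => by simp
  | (m + 1) => by
    have h1 : x ^ (m + 2) = x * x ^ (m + 1) := by ring
    rw [h1, leibniz, bracket_pow a x m]
    push_cast
    ring

lemma rad_poisson (K : Ideal A) (hK : ∀ a : A, ∀ x ∈ K, bracket a x ∈ K)
    (a : A) {x : A} (hx : x ∈ K.radical) : bracket a x ∈ K.radical := by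
  obtain ⟨n, hn⟩ := hx
  rcases n with _ | m
  · -- 1 ∈ K, so K = ⊤
    have : K = ⊤ := (Ideal.eq_top_iff_one K).mpr (by simpa using hn)
    rw [this]
    exact Ideal.le_radical trivial
  · set u := bracket a x with hu
    have claim : ∀ j : ℕ, j ≤ m → x ^ (m - j) * u ^ (2 * j + 1) ∈ K := by
      intro j
      induction j with
      | zero =>
          intro _
          have h1 : bracket a (x ^ (m + 1)) ∈ K := hK a _ hn
          rw [bracket_pow bracket leibniz a x m] at h1
          have h2 : ((m + 1 : ℕ) : A) * (x ^ m * u) ∈ K := by push_cast; exact h1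
          have := cast_cancel k K (Nat.succ_pos m) h2
          simpa using this
      | succ j ih =>
          intro hjm
          have hc : x ^ (m - j) * u ^ (2 * j + 1) ∈ K := ih (by omega)
          set c := x ^ (m - j) * u ^ (2 * j + 1) with hcdef
          have hbc : bracket a c ∈ K := hK a _ hc
          have hmj : m - j = (m - (j + 1)) + 1 := by omega
          have hexp : bracket a c =
              (((m - (j + 1) : ℕ) : A) + 1) * (x ^ (m - (j + 1)) * u) * u ^ (2 * j + 1)
              + x ^ (m - j) * ((((2 * j : ℕ) : A) + 1) * (u ^ (2 * j) * bracket a u)) := by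
            rw [hcdef, leibniz, hmj, bracket_pow bracket leibniz a x (m - (j+1))]
            have : 2 * j + 1 = (2 * j) + 1 := rfl
            rw [bracket_pow bracket leibniz a u (2 * j)]
          have hkey : (((m - (j + 1) : ℕ) : A) + 1) * (x ^ (m - (j + 1)) * u ^ (2 * (j + 1) + 1))
              = bracket a c * u
                - (((2 * j : ℕ) : A) + 1) * (c * bracket a u) := by
            rw [hexp, hcdef, hmj]
            ring
          have hmem : (((m - (j + 1)) + 1 : ℕ) : A) *
              (x ^ (m - (j + 1)) * u ^ (2 * (j + 1) + 1)) ∈ K := by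
            push_cast
            rw [hkey]
            exact K.sub_mem (K.mul_mem_right u hbc)
              (K.mul_mem_left _ (K.mul_mem_right _ hc))
          exact cast_cancel k K (Nat.succ_pos _) hmem
    have := claim m le_rfl
    simp only [Nat.sub_self, pow_zero, one_mul] at this
    exact ⟨2 * m + 1, this⟩

end Rad

section Prime

variable {k A : Type} [Field k] [CharZero k] [CommRing A] [Algebra k A]
variable (bracket : A →ₗ[k] A →ₗ[k] A)
variable (leibniz : ∀ a b c : A, bracket a (b * c) = bracket a b * c + b * bracket a c)
variable (I : Ideal A)

theorem pcore_isPrime [IsNoetherianRing A] (hI : I.IsPrime) :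
    (pcore bracket leibniz I).IsPrime := by
  classical
  set K := pcore bracket leibniz I with hKdef
  have hKpo : ∀ a : A, ∀ x ∈ K, bracket a x ∈ K :=
    fun a x hx => pcore_poisson bracket leibniz I a hx
  have hKle : K ≤ I := pcore_le bracket leibniz I
  have hrad : K.radical = K := by
    refine le_antisymm ?_ Ideal.le_radical
    refine le_pcore bracket leibniz I K.radical ?_ ?_
    · intro a x hx
      exact rad_poisson bracket leibniz K hKpo a hx
    · exact (Ideal.radical_mono hKle).trans (le_of_eq hI.radical)
  have hfin : K.minimalPrimes.Finite := by
    rw [Ideal.minimalPrimes_eq_comap]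
    exact (minimalPrimes.finite_of_isNoetherianRing (A ⧸ K)).image _
  obtain ⟨Q, hQ, hQI⟩ := Ideal.exists_minimalPrimes_le hKle
  have hQp : Q.IsPrime := hQ.1.1
  have hKQ : K ≤ Q := hQ.1.2
  have hs : ∃ s, (∀ Q' ∈ K.minimalPrimes, Q' ≠ Q → s ∈ Q') ∧ s ∉ Q := by
    have hnle : ¬ ((hfin.toFinset.erase Q).inf id ≤ Q) := by
      rw [hQp.inf_le']
      rintro ⟨Q', hQ'mem, hle⟩
      obtain ⟨hne, hQ'min⟩ := Finset.mem_erase.mp hQ'mem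
      rw [hfin.mem_toFinset] at hQ'min
      exact hne (le_antisymm hle (hQ.2 hQ'min.1 hle))
    obtain ⟨s, hs1, hs2⟩ := SetLike.not_le_iff_exists.mp hnle
    refine ⟨s, ?_, hs2⟩
    intro Q' hQ'min hne
    have : Q' ∈ hfin.toFinset.erase Q :=
      Finset.mem_erase.mpr ⟨hne, hfin.mem_toFinset.mpr hQ'min⟩
    exact (Submodule.mem_finsetInf.mp hs1) Q' this
  obtain ⟨s, hsmem, hsQ⟩ := hs
  have hQpo : ∀ a : A, ∀ x ∈ Q, bracket a x ∈ Q := by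
    intro a x hx
    have hsx : s * x ∈ K := by
      rw [← hrad, ← Ideal.sInf_minimalPrimes]
      refine Submodule.mem_sInf.mpr ?_
      intro Q' hQ'
      by_cases hq : Q' = Q
      · subst hq; exact Ideal.mul_mem_left _ s hx
      · exact Ideal.mul_mem_right x _ (hsmem Q' hQ' hq)
    have h1 : bracket a (s * x) ∈ Q := hKQ (hKpo a _ hsx)
    rw [leibniz] at h1
    have h2 : bracket a s * x ∈ Q := Q.mul_mem_left _ hx
    have h3 : s * bracket a x ∈ Q := by
      have := Q.sub_mem h1 h2
      simpa using this
    rcases hQp.mem_or_mem h3 with h | h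
    · exact absurd h hsQ
    · exact h
  have hQK : Q ≤ K := le_pcore bracket leibniz I Q hQpo hQI
  have hKQ' : K = Q := le_antisymm hKQ hQK
  rw [hKQ']
  exact hQp

end Prime

/-- The Poisson core `P(I)` of an ideal `I` in a Poisson algebra — the sum of all Poisson
ideals contained in `I` — is a Poisson ideal contained in `I`, is the largest such, and if
`I` is prime (with `A` Noetherian over a field of characteristic zero) then `P(I)` is a
Poisson prime ideal. -/
theorem stmt17 (k A : Type) [Field k] [CharZero k] [CommRing A] [Algebra k A]
    [IsNoetherianRing A]
    (bracket : A →ₗ[k] A →ₗ[k] A)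
    (skew : ∀ a b, bracket a b = - bracket b a)
    (jacobi : ∀ a b c,
      bracket a (bracket b c) + bracket c (bracket a b) + bracket b (bracket c a) = 0)
    (leibniz : ∀ a b c, bracket a (b * c) = bracket a b * c + b * bracket a c)
    (I : Ideal A) :
    let P : Ideal A := sSup {J : Ideal A | (∀ a : A, ∀ x ∈ J, bracket a x ∈ J) ∧ J ≤ I}
    (∀ a : A, ∀ x ∈ P, bracket a x ∈ P) ∧ P ≤ I ∧
      (∀ J : Ideal A, (∀ a : A, ∀ x ∈ J, bracket a x ∈ J) → J ≤ I → J ≤ P) ∧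
      (I.IsPrime → P.IsPrime) := by
  intro P
  have hP : P = pcore bracket leibniz I := by
    refine le_antisymm (sSup_le fun J hJ => le_pcore bracket leibniz I J hJ.1 hJ.2) ?_
    exact le_sSup ⟨fun a x hx => pcore_poisson bracket leibniz I a hx,
      pcore_le bracket leibniz I⟩
  refine ⟨?_, ?_, ?_, ?_⟩
  · intro a x hx
    rw [hP] at hx ⊢
    exact pcore_poisson bracket leibniz I a hx
  · rw [hP]; exact pcore_le bracket leibniz I
  · intro J hJ hJI
    rw [hP]
    exact le_pcore bracket leibniz I J hJ hJI
  · intro hI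
    rw [hP]
    exact pcore_isPrime bracket leibniz I hI
end

section
/- Let Λ be a skew-symmetric n×n integer matrix with kernel spanned by c₁,...,c_t ∈ ℤⁿ (a ℤ-basis of ker Λ ∩ ℤⁿ). In the Poisson torus (k[x₁^{±1},...,x_n^{±1}], Λ) over a field k of characteristic 0, every Poisson ideal is generated by its intersection with the Poisson center k[x^{±c₁},...,x^{±c_t}]. In particular, if Λ is nondegenerate (t = 0), the only Poisson ideals of the Poisson torus are 0 and the whole ring. -/
open Matrix

namespace Stmt19Aux

variable {k : Type} [Field k] [CharZero k] {n : ℕ}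
  (Λ : Matrix (Fin n) (Fin n) ℤ)
  (bracket : AddMonoidAlgebra k (Fin n → ℤ) →ₗ[k]
    AddMonoidAlgebra k (Fin n → ℤ) →ₗ[k] AddMonoidAlgebra k (Fin n → ℤ))

theorem claimB (φ : (Fin n → ℤ) → k) (f : AddMonoidAlgebra k (Fin n → ℤ)) (b' : Fin n → ℤ) :
    (f.coeff.sum fun b v => AddMonoidAlgebra.single b (φ b * v)).coeff b' = φ b' * f.coeff b' := by
  classical
  rw [AddMonoidAlgebra.coeff_finsuppSum, Finsupp.sum_apply, Finsupp.sum]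
  simp only [AddMonoidAlgebra.coeff_single, Finsupp.single_apply]
  rw [Finset.sum_ite_eq' f.coeff.support b' (fun b => φ b * f.coeff b)]
  by_cases h : b' ∈ f.coeff.support
  · simp [h]
  · simp [h, Finsupp.notMem_support_iff.mp h]

theorem claimA
    (hmono : ∀ a b : Fin n → ℤ,
      bracket (AddMonoidAlgebra.single a 1) (AddMonoidAlgebra.single b 1)
        = ((a ⬝ᵥ Λ.mulVec b : ℤ) : k) • AddMonoidAlgebra.single (a + b) 1)
    (e : Fin n → ℤ) (f : AddMonoidAlgebra k (Fin n → ℤ)) :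
    AddMonoidAlgebra.single (-e) (1:k) * bracket (AddMonoidAlgebra.single e 1) f
      = f.coeff.sum fun b v => AddMonoidAlgebra.single b (((e ⬝ᵥ Λ.mulVec b : ℤ) : k) * v) := by
  classical
  induction f using AddMonoidAlgebra.induction_linear with
  | zero => simp
  | add f g hf hg =>
      rw [map_add, mul_add, hf, hg, AddMonoidAlgebra.coeff_add, Finsupp.sum_add_index]
      · intro b _; simp
      · intro b _ v w; rw [mul_add, AddMonoidAlgebra.single_add]
  | single b v =>
      have hb : (AddMonoidAlgebra.single b v : AddMonoidAlgebra k (Fin n → ℤ))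
          = v • AddMonoidAlgebra.single b 1 := by
        rw [AddMonoidAlgebra.smul_single', mul_one]
      rw [AddMonoidAlgebra.coeff_single, Finsupp.sum_single_index (by simp), hb, _root_.map_smul, hmono]
      rw [smul_smul, Algebra.mul_smul_comm, AddMonoidAlgebra.single_mul_single, one_mul,
        neg_add_cancel_left, AddMonoidAlgebra.smul_single', mul_one, mul_comm]

theorem main
    (hmono : ∀ a b : Fin n → ℤ,
      bracket (AddMonoidAlgebra.single a 1) (AddMonoidAlgebra.single b 1)
        = ((a ⬝ᵥ Λ.mulVec b : ℤ) : k) • AddMonoidAlgebra.single (a + b) 1)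
    (J : Ideal (AddMonoidAlgebra k (Fin n → ℤ)))
    (hJ : ∀ a, ∀ x ∈ J, bracket a x ∈ J) :
    ∀ m : ℕ, ∀ f ∈ J, f.coeff.support.card ≤ m →
      f ∈ Ideal.span (↑J ∩
        ↑(Submodule.span k {g : AddMonoidAlgebra k (Fin n → ℤ) |
            ∃ c : Fin n → ℤ, Λ.mulVec c = 0 ∧ g = AddMonoidAlgebra.single c 1})) := by
  classical
  set S : Set (AddMonoidAlgebra k (Fin n → ℤ)) := ↑J ∩
      ↑(Submodule.span k {g : AddMonoidAlgebra k (Fin n → ℤ) |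
          ∃ c : Fin n → ℤ, Λ.mulVec c = 0 ∧ g = AddMonoidAlgebra.single c 1}) with hS
  intro m
  induction m with
  | zero =>
      intro f hf hcard
      have hf0 : f = 0 :=
        AddMonoidAlgebra.coeff_eq_zero.mp
          (Finsupp.support_eq_empty.mp (Finset.card_eq_zero.mp (Nat.le_zero.mp hcard)))
      simp [hf0]
  | succ m ih =>
      intro f hf hcard
      by_cases hf0 : f = 0
      · simp [hf0]
      obtain ⟨a₀, ha₀⟩ := Finsupp.support_nonempty_iff.mpr (mt AddMonoidAlgebra.coeff_eq_zero.mp hf0)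
      set g : AddMonoidAlgebra k (Fin n → ℤ) := AddMonoidAlgebra.single (-a₀) 1 * f with hgdef
      have hg : g ∈ J := J.mul_mem_left _ hf
      have hgapp : ∀ y, g.coeff y = f.coeff (a₀ + y) := by
        intro y
        rw [hgdef, AddMonoidAlgebra.coeff_single_mul_apply, one_mul, neg_neg]
      have hsupp : g.coeff.support = f.coeff.support.map ⟨fun b => -a₀ + b, fun x y hxy => by simpa using hxy⟩ := by
        ext y
        simp only [Finsupp.mem_support_iff, Finset.mem_map, Function.Embedding.coeFn_mk, hgapp]
        constructor
        · intro hy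
          exact ⟨a₀ + y, hy, neg_add_cancel_left a₀ y⟩
        · rintro ⟨b, hb, rfl⟩
          show f.coeff (a₀ + (-a₀ + b)) ≠ 0; rw [add_neg_cancel_left]
          exact hb
      have hcardg : g.coeff.support.card = f.coeff.support.card := by rw [hsupp, Finset.card_map]
      have hg0 : g.coeff 0 ≠ 0 := by
        rw [hgapp, add_zero]; exact Finsupp.mem_support_iff.mp ha₀
      have hfg : AddMonoidAlgebra.single a₀ (1:k) * g = f := by
        rw [hgdef, ← mul_assoc, AddMonoidAlgebra.single_mul_single, one_mul, add_neg_cancel,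
          ← AddMonoidAlgebra.one_def, one_mul]
      suffices hgspan : g ∈ Ideal.span S by
        rw [← hfg]; exact Ideal.mul_mem_left _ _ hgspan
      by_cases hcen : ∀ b ∈ g.coeff.support, Λ.mulVec b = 0
      · have hfun : (fun (b : Fin n → ℤ) (v : k) =>
            v • (AddMonoidAlgebra.single b 1 : AddMonoidAlgebra k (Fin n → ℤ)))
            = fun b v => AddMonoidAlgebra.single b v := by
          funext b v
          rw [AddMonoidAlgebra.smul_single', mul_one]
        have hrep : g.coeff.sum (fun b v =>
            v • (AddMonoidAlgebra.single b 1 : AddMonoidAlgebra k (Fin n → ℤ))) = g := by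
          rw [hfun, AddMonoidAlgebra.sum_coeff_single]
        have hgmem : g ∈ Submodule.span k {g : AddMonoidAlgebra k (Fin n → ℤ) |
            ∃ c : Fin n → ℤ, Λ.mulVec c = 0 ∧ g = AddMonoidAlgebra.single c 1} := by
          rw [← hrep, Finsupp.sum]
          exact Submodule.sum_mem _ fun b hb => Submodule.smul_mem _ _
            (Submodule.subset_span ⟨b, hcen b hb, rfl⟩)
        exact Ideal.subset_span ⟨hg, hgmem⟩
      · push_neg at hcen
        obtain ⟨b₀, hb₀s, hb₀⟩ := hcen
        obtain ⟨i, hi⟩ : ∃ i, Λ.mulVec b₀ i ≠ 0 := by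
          by_contra hcon; push_neg at hcon; exact hb₀ (funext hcon)
        set e : Fin n → ℤ := Pi.single i 1 with he
        set φ : (Fin n → ℤ) → k := fun b => ((e ⬝ᵥ Λ.mulVec b : ℤ) : k) with hφ
        set h : AddMonoidAlgebra k (Fin n → ℤ) :=
          g.coeff.sum fun b v => AddMonoidAlgebra.single b (φ b * v) with hh
        have hhJ : h ∈ J := by
          rw [hh, ← claimA Λ bracket hmono e g]
          exact J.mul_mem_left _ (hJ _ _ hg)
        have hhapp : ∀ b', h.coeff b' = φ b' * g.coeff b' := fun b' => claimB φ g b'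
        have hφ0 : φ 0 = 0 := by simp [hφ, Matrix.mulVec_zero]
        have hsub : h.coeff.support ⊆ g.coeff.support.erase 0 := by
          intro b hb
          rw [Finsupp.mem_support_iff, hhapp] at hb
          rw [Finset.mem_erase, Finsupp.mem_support_iff]
          refine ⟨fun hb0 => hb ?_, fun hgb => hb (by rw [hgb, mul_zero])⟩
          rw [hb0, hφ0, zero_mul]
        have hmemg0 : (0 : Fin n → ℤ) ∈ g.coeff.support := Finsupp.mem_support_iff.mpr hg0
        have hcardh : h.coeff.support.card ≤ m := by
          have h1 := Finset.card_le_card hsub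
          have h2 := Finset.card_erase_of_mem hmemg0
          omega
        have hhspan := ih h hhJ hcardh
        set c : ℤ := Λ.mulVec b₀ i with hc
        have hφb₀ : φ b₀ = (c : k) := by
          simp [hφ, he, hc, single_dotProduct]
        set h' : AddMonoidAlgebra k (Fin n → ℤ) := h - (c : k) • g with hh'
        have hh'J : h' ∈ J := sub_mem hhJ (Submodule.smul_of_tower_mem J _ hg)
        have hh'app : ∀ b', h'.coeff b' = φ b' * g.coeff b' - (c : k) * g.coeff b' := by
          intro b'
          rw [hh', AddMonoidAlgebra.coeff_sub, Finsupp.sub_apply, AddMonoidAlgebra.coeff_smul, Finsupp.smul_apply, hhapp, smul_eq_mul]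
        have hsub' : h'.coeff.support ⊆ g.coeff.support.erase b₀ := by
          intro b hb
          rw [Finsupp.mem_support_iff, hh'app] at hb
          rw [Finset.mem_erase, Finsupp.mem_support_iff]
          constructor
          · rintro rfl; exact hb (by rw [hφb₀, sub_self])
          · intro hgb; exact hb (by rw [hgb, mul_zero, mul_zero, sub_zero])
        have hcardh' : h'.coeff.support.card ≤ m := by
          have h1 := Finset.card_le_card hsub'
          have h2 := Finset.card_erase_of_mem hb₀s
          omega
        have hh'span := ih h' hh'J hcardh'
        have hcg : (c : k) • g = h - h' := by rw [hh']; ring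
        have hck : (c : k) ≠ 0 := Int.cast_ne_zero.mpr hi
        have hmem : (c : k) • g ∈ Ideal.span S := hcg ▸ sub_mem hhspan hh'span
        have := Submodule.smul_of_tower_mem (Ideal.span S) ((c : k)⁻¹) hmem
        rwa [smul_smul, inv_mul_cancel₀ hck, one_smul] at this

end Stmt19Aux

/-- In the Poisson torus defined by a skew-symmetric integer matrix `Λ`, every Poisson
ideal is generated by its intersection with the Poisson center (the span of the monomials
`x^c` with `Λc = 0`). In particular, when `Λ` is nondegenerate the only Poisson ideals are
`0` and the whole ring. -/
theorem stmt19 (k : Type) [Field k] [CharZero k] (n : ℕ)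
    (Λ : Matrix (Fin n) (Fin n) ℤ) (hskew : Λᵀ = -Λ)
    (bracket : AddMonoidAlgebra k (Fin n → ℤ) →ₗ[k]
      AddMonoidAlgebra k (Fin n → ℤ) →ₗ[k] AddMonoidAlgebra k (Fin n → ℤ))
    (hmono : ∀ a b : Fin n → ℤ,
      bracket (AddMonoidAlgebra.single a 1) (AddMonoidAlgebra.single b 1)
        = ((a ⬝ᵥ Λ.mulVec b : ℤ) : k) • AddMonoidAlgebra.single (a + b) 1)
    (hleibniz : ∀ a b c, bracket a (b * c) = bracket a b * c + b * bracket a c)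
    (J : Ideal (AddMonoidAlgebra k (Fin n → ℤ)))
    (hJ : ∀ a, ∀ x ∈ J, bracket a x ∈ J) :
    J = Ideal.span (↑J ∩
        ↑(Submodule.span k {g : AddMonoidAlgebra k (Fin n → ℤ) |
            ∃ c : Fin n → ℤ, Λ.mulVec c = 0 ∧ g = AddMonoidAlgebra.single c 1})) ∧
    (Function.Injective (Λ.mulVec : (Fin n → ℤ) → (Fin n → ℤ)) → J ≠ ⊥ → J = ⊤) := by
  classical
  have hpart1 : J = Ideal.span (↑J ∩
      ↑(Submodule.span k {g : AddMonoidAlgebra k (Fin n → ℤ) |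
          ∃ c : Fin n → ℤ, Λ.mulVec c = 0 ∧ g = AddMonoidAlgebra.single c 1})) := by
    refine le_antisymm (fun x hx => ?_) (Ideal.span_le.mpr Set.inter_subset_left)
    exact Stmt19Aux.main Λ bracket hmono J hJ x.coeff.support.card x hx le_rfl
  refine ⟨hpart1, fun hinj hne => ?_⟩
  have hset : {g : AddMonoidAlgebra k (Fin n → ℤ) |
      ∃ c : Fin n → ℤ, Λ.mulVec c = 0 ∧ g = AddMonoidAlgebra.single c 1}
      = {(1 : AddMonoidAlgebra k (Fin n → ℤ))} := by
    ext x
    constructor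
    · rintro ⟨c, hc, rfl⟩
      have hc0 : c = 0 := hinj (by rw [hc, Matrix.mulVec_zero])
      rw [hc0, ← AddMonoidAlgebra.one_def]
      rfl
    · rintro rfl
      exact ⟨0, Matrix.mulVec_zero Λ, AddMonoidAlgebra.one_def⟩
  have hex : ∃ x ∈ (↑J ∩
      ↑(Submodule.span k {g : AddMonoidAlgebra k (Fin n → ℤ) |
          ∃ c : Fin n → ℤ, Λ.mulVec c = 0 ∧ g = AddMonoidAlgebra.single c 1}) :
        Set (AddMonoidAlgebra k (Fin n → ℤ))), x ≠ 0 := by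
    by_contra hcon
    push_neg at hcon
    exact hne (hpart1.trans (Ideal.span_eq_bot.mpr hcon))
  obtain ⟨x, ⟨hxJ, hxspan⟩, hx0⟩ := hex
  rw [hset] at hxspan
  obtain ⟨r, hr⟩ := Submodule.mem_span_singleton.mp hxspan
  have hr0 : r ≠ 0 := fun h => hx0 (by rw [← hr, h, zero_smul])
  rw [Ideal.eq_top_iff_one]
  have hmem := Submodule.smul_of_tower_mem J r⁻¹ hxJ
  rwa [← hr, smul_smul, inv_mul_cancel₀ hr0, one_smul] at hmem
end
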